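/- Let F ∈ 𝓘 with supp F ⊂ (θL, θH) and let Q be an F-ICC allocation. Then for every ū ≥ 0 the mechanism (Q, ū) is F-IC. -/

import Mathlib

open MeasureTheory Set Filter

/-- A cumulative distribution function on `[θL, θH]`. -/
structure CDF (θL θH : ℝ) where
  toFun : ℝ → ℝ
  mono : Monotone toFun
  right_continuous : ∀ x, ContinuousWithinAt toFun (Set.Ici x) x
  eq_zero : ∀ x, x < θL → toFun x = 0
  eq_one : ∀ x, θH ≤ x → toFun x = 1

namespace CDF

variable {θL θH : ℝ}

/-- The Stieltjes function associated with a CDF. -/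
noncomputable def stieltjes (F : CDF θL θH) : StieltjesFunction ℝ :=
  ⟨F.toFun, F.mono, F.right_continuous⟩

/-- The Lebesgue–Stieltjes measure of a CDF. -/
noncomputable def meas (F : CDF θL θH) : Measure ℝ := F.stieltjes.measure

/-- The integral `∫ φ dF`. -/
noncomputable def integ (F : CDF θL θH) (φ : ℝ → ℝ) : ℝ := ∫ θ, φ θ ∂F.meas

/-- The support of the distribution with CDF `F`. -/
def supp (F : CDF θL θH) : Set ℝ :=
  {x | ∀ ε > 0, 0 < F.toFun (x + ε) - F.toFun (x - ε)}

/-- The left limit `F₋`. -/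
noncomputable def leftLim (F : CDF θL θH) (x : ℝ) : ℝ := Function.leftLim F.toFun x

/-- The mean `∫ θ dF(θ)`. -/
noncomputable def mean (F : CDF θL θH) : ℝ := F.integ (fun θ => θ)

end CDF

/-- `I_F(θ) = ∫_{θL}^{θ} (F₀(t) − F(t)) dt`. -/
noncomputable def IFun {θL θH : ℝ} (F₀ F : CDF θL θH) (θ : ℝ) : ℝ :=
  ∫ t in θL..θ, (F₀.toFun t - F.toFun t)

/-- `F ∈ 𝓘`: `F` is a feasible signal given the prior `F₀`. -/
def IsSignal {θL θH : ℝ} (F₀ F : CDF θL θH) : Prop :=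
  (∀ θ ∈ Set.Icc θL θH, 0 ≤ IFun F₀ F θ) ∧ IFun F₀ F θH = 0

/-- The prior's support contains both endpoints. -/
def IsPrior {θL θH : ℝ} (F₀ : CDF θL θH) : Prop :=
  θL ∈ F₀.supp ∧ θH ∈ F₀.supp

/-- Assumptions on the information-cost function `c` (with derivatives `c'`, `c''`). -/
structure CostAssumptions (θL θH θ₀ : ℝ) (c c' c'' : ℝ → ℝ) : Prop where
  cont : ContinuousOn c (Set.Icc θL θH)
  nonneg : ∀ θ ∈ Set.Icc θL θH, 0 ≤ c θ
  hasDeriv : ∀ θ ∈ Set.Ioo θL θH, HasDerivAt c (c' θ) θ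
  hasDeriv2 : ∀ θ ∈ Set.Ioo θL θH, HasDerivAt c' (c'' θ) θ
  cont2 : ContinuousOn c'' (Set.Ioo θL θH)
  pos2 : ∀ θ ∈ Set.Ioo θL θH, 0 < c'' θ
  minAt : ∀ θ ∈ Set.Icc θL θH, c θ₀ ≤ c θ
  slopeBot : Filter.Tendsto c' (nhdsWithin θL (Set.Ioi θL)) Filter.atBot
  slopeTop : Filter.Tendsto c' (nhdsWithin θH (Set.Iio θH)) Filter.atTop

/-- Assumptions on the production-cost function `κ` (with derivative `κ'`). -/
structure KappaAssumptions (θL θH qbar : ℝ) (κ κ' : ℝ → ℝ) : Prop where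
  hasDeriv : ∀ q ∈ Set.Icc (0:ℝ) qbar, HasDerivWithinAt κ (κ' q) (Set.Icc 0 qbar) q
  contDeriv : ContinuousOn κ' (Set.Icc 0 qbar)
  strictMono : StrictMonoOn κ (Set.Icc 0 qbar)
  strictConvex : StrictConvexOn ℝ (Set.Icc 0 qbar) κ
  zero : κ 0 = 0
  nonneg : ∀ q ∈ Set.Icc (0:ℝ) qbar, 0 ≤ κ q
  derivZero : κ' 0 ≤ θL
  derivTop : θH < κ' qbar

/-- An allocation: a nondecreasing map from types into `[0, q̄]`. -/
def IsAllocation (θL θH qbar : ℝ) (Q : ℝ → ℝ) : Prop :=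
  MonotoneOn Q (Set.Icc θL θH) ∧ ∀ θ ∈ Set.Icc θL θH, Q θ ∈ Set.Icc 0 qbar

/-- The buyer's value `V_{Q,ū}(θ) = ū + ∫_{θL}^{θ} Q(t) dt`. -/
noncomputable def Vfun (θL : ℝ) (Q : ℝ → ℝ) (u θ : ℝ) : ℝ :=
  u + ∫ t in θL..θ, Q t

/-- The mechanism `(Q, ū)` is `F`-incentive compatible. -/
def IsIC {θL θH : ℝ} (F₀ : CDF θL θH) (c : ℝ → ℝ) (Q : ℝ → ℝ) (u : ℝ)
    (F : CDF θL θH) : Prop :=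
  IsSignal F₀ F ∧
  ∀ F' : CDF θL θH, IsSignal F₀ F' →
    F'.integ (fun θ => Vfun θL Q u θ - c θ) ≤ F.integ (fun θ => Vfun θL Q u θ - c θ)

/-- The monopolist's per-report profit `π_{Q,ū}(θ)`. -/
noncomputable def profit (θL : ℝ) (κ Q : ℝ → ℝ) (u θ : ℝ) : ℝ :=
  θ * Q θ - Vfun θL Q u θ - κ (Q θ)

/-- `(Q, F)` is monopolist-optimal. -/
def MonopolistOptimal {θL θH : ℝ} (qbar : ℝ) (F₀ : CDF θL θH) (c κ : ℝ → ℝ)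
    (Q : ℝ → ℝ) (F : CDF θL θH) : Prop :=
  IsAllocation θL θH qbar Q ∧ IsIC F₀ c Q 0 F ∧
  ∀ (Q' : ℝ → ℝ) (u' : ℝ) (F' : CDF θL θH),
    IsAllocation θL θH qbar Q' → 0 ≤ u' → IsIC F₀ c Q' u' F' →
    F'.integ (profit θL κ Q' u') ≤ F.integ (profit θL κ Q 0)

/-- `P` is an `F`-shadow price. -/
def IsShadowPrice {θL θH : ℝ} (F₀ F : CDF θL θH) (P : ℝ → ℝ) : Prop :=
  (∃ K : NNReal, LipschitzOnWith K P (Set.Icc θL θH)) ∧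
  ConvexOn ℝ (Set.Icc θL θH) P ∧
  ∀ a b : ℝ, Set.Ioo a b ⊆ {θ | θ ∈ Set.Icc θL θH ∧ 0 < IFun F₀ F θ} →
    ∃ m k : ℝ, ∀ θ ∈ Set.Ioo a b, P θ = m * θ + k

/-- `P` is an `F`-shadow price for `φ`. -/
def IsShadowPriceFor {θL θH : ℝ} (F₀ F : CDF θL θH) (φ P : ℝ → ℝ) : Prop :=
  IsShadowPrice F₀ F P ∧ (∀ θ ∈ Set.Icc θL θH, φ θ ≤ P θ) ∧
  ∀ θ ∈ F.supp, P θ = φ θ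

/-- `θL_F`, the minimum of the support of `F`. -/
noncomputable def thetaLF {θL θH : ℝ} (F : CDF θL θH) : ℝ := sInf F.supp

/-- `θH_F`, the maximum of the support of `F`. -/
noncomputable def thetaHF {θL θH : ℝ} (F : CDF θL θH) : ℝ := sSup F.supp

/-- `p` is an `F`-shadow derivative. -/
def IsShadowDeriv {θL θH : ℝ} (qbar : ℝ) (F₀ : CDF θL θH) (c' : ℝ → ℝ)
    (F : CDF θL θH) (p : ℝ → ℝ) : Prop :=
  (∃ M : ℝ, ∀ θ ∈ Set.Icc θL θH, |p θ| ≤ M) ∧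
  MonotoneOn p (Set.Icc θL θH) ∧
  (∀ a b : ℝ, Set.Ioo a b ⊆ {θ | θ ∈ Set.Icc θL θH ∧ 0 < IFun F₀ F θ} →
    ∀ x ∈ Set.Ioo a b, ∀ y ∈ Set.Ioo a b, p x = p y) ∧
  -c' (thetaLF F) ≤ p (thetaLF F) ∧
  p (thetaHF F) ≤ qbar - c' (thetaHF F)

/-- The allocation `Q^p` induced by a shadow derivative `p`. -/
noncomputable def inducedAlloc {θL θH : ℝ} (qbar : ℝ) (c' : ℝ → ℝ)
    (F : CDF θL θH) (p : ℝ → ℝ) (θ : ℝ) : ℝ :=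
  if θ < thetaLF F then max (p (thetaLF F) + c' θ) 0
  else if θ ≤ thetaHF F then p θ + c' θ
  else min (p (thetaHF F) + c' θ) qbar

/-- `Q` is `F`-information-cost-canceling. -/
def IsICC {θL θH : ℝ} (qbar : ℝ) (F₀ : CDF θL θH) (c' : ℝ → ℝ)
    (F : CDF θL θH) (Q : ℝ → ℝ) : Prop :=
  ∃ p : ℝ → ℝ, IsShadowDeriv qbar F₀ c' F p ∧
    ∀ θ ∈ Set.Icc θL θH, Q θ = inducedAlloc qbar c' F p θ

/-- `φ` satisfies edge irrelevance: some maximizer over CDFs with the prior mean has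
support in the open interval. -/
def EdgeIrrelevant {θL θH : ℝ} (F₀ : CDF θL θH) (φ : ℝ → ℝ) : Prop :=
  ∃ F' : CDF θL θH, F'.mean = F₀.mean ∧
    (∀ G : CDF θL θH, G.mean = F₀.mean → G.integ φ ≤ F'.integ φ) ∧
    F'.supp ⊆ Set.Ioo θL θH

/-- `θH_Q = inf {θ : Q(θ) = Q(θH)}`. -/
noncomputable def thetaHQ (θL θH : ℝ) (Q : ℝ → ℝ) : ℝ :=
  sInf {θ | θ ∈ Set.Icc θL θH ∧ Q θ = Q θH}

/-- `θL_Q = sup {θ : Q(θ) = Q(θL)}`. -/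
noncomputable def thetaLQ (θL θH : ℝ) (Q : ℝ → ℝ) : ℝ :=
  sSup {θ | θ ∈ Set.Icc θL θH ∧ Q θ = Q θL}

/-- The support of a (cumulative distribution) function `G : ℝ → ℝ`. -/
def suppOfFun (G : ℝ → ℝ) : Set ℝ := {x | ∀ ε > 0, 0 < G (x + ε) - G (x - ε)}

/-- The conditional CDF `F(·|θ ∈ [a, b])`. -/
noncomputable def condFun {θL θH : ℝ} (F : CDF θL θH) (a b θ : ℝ) : ℝ :=
  if θ < a then 0
  else (F.toFun (min θ b) - F.leftLim a) / (F.toFun b - F.leftLim a)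


section Aux
open MeasureTheory Set Filter Topology

variable {θL θH : ℝ}

lemma s6_nonneg (G : CDF θL θH) (x : ℝ) : 0 ≤ G.toFun x := by
  rcases lt_or_ge x θL with h | h
  · rw [G.eq_zero x h]
  · calc (0:ℝ) = G.toFun (θL - 1) := (G.eq_zero _ (by linarith)).symm
      _ ≤ G.toFun x := G.mono (by linarith)

lemma s6_le_one (G : CDF θL θH) (x : ℝ) : G.toFun x ≤ 1 := by
  rcases le_or_gt θH x with h | h
  · rw [G.eq_one x h]
  · calc G.toFun x ≤ G.toFun θH := G.mono h.le
      _ = 1 := G.eq_one _ le_rfl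

lemma s6_tendsto_bot (G : CDF θL θH) : Tendsto G.toFun atBot (𝓝 0) := by
  have h : (fun _ : ℝ => (0:ℝ)) =ᶠ[atBot] G.toFun := by
    filter_upwards [eventually_le_atBot (θL - 1)] with x hx
    exact (G.eq_zero x (by linarith)).symm
  exact Tendsto.congr' h tendsto_const_nhds

lemma s6_tendsto_top (G : CDF θL θH) : Tendsto G.toFun atTop (𝓝 1) := by
  have h : (fun _ : ℝ => (1:ℝ)) =ᶠ[atTop] G.toFun := by
    filter_upwards [eventually_ge_atTop θH] with x hx
    exact (G.eq_one x hx).symm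
  exact Tendsto.congr' h tendsto_const_nhds

lemma s6_meas_univ (G : CDF θL θH) : G.meas Set.univ = 1 := by
  have := StieltjesFunction.measure_univ G.stieltjes (l := 0) (u := 1)
    (s6_tendsto_bot G) (s6_tendsto_top G)
  simpa [CDF.meas] using this

lemma s6_meas_Iic (G : CDF θL θH) (x : ℝ) :
    G.meas (Set.Iic x) = ENNReal.ofReal (G.toFun x) := by
  have := StieltjesFunction.measure_Iic G.stieltjes (l := 0) (s6_tendsto_bot G) x
  have h2 : (G.stieltjes : ℝ → ℝ) x = G.toFun x := rfl
  simpa [CDF.meas, h2] using this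

lemma s6_prob (G : CDF θL θH) : IsProbabilityMeasure G.meas := ⟨s6_meas_univ G⟩

lemma s6_meas_Ioi (G : CDF θL θH) (x : ℝ) :
    G.meas (Set.Ioi x) = ENNReal.ofReal (1 - G.toFun x) := by
  haveI := s6_prob G
  have hc : Set.Ioi x = (Set.Iic x)ᶜ := by simp
  rw [hc, measure_compl measurableSet_Iic (measure_ne_top _ _), s6_meas_univ, s6_meas_Iic,
    ← ENNReal.ofReal_one, ← ENNReal.ofReal_sub _ (s6_nonneg G x)]

lemma s6_meas_Iio (G : CDF θL θH) : G.meas (Set.Iio θL) = 0 := by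
  have hcov : Set.Iio θL ⊆ ⋃ n : ℕ, Set.Iic (θL - 1 / (n + 1)) := by
    intro x hx
    obtain ⟨n, hn⟩ := exists_nat_one_div_lt (show (0:ℝ) < θL - x by simpa using hx)
    exact Set.mem_iUnion.2 ⟨n, by simp only [Set.mem_Iic]; linarith [hn]⟩
  refine measure_mono_null hcov (measure_iUnion_null fun n => ?_)
  have h0 : (0:ℝ) < 1 / (n + 1) := by positivity
  rw [s6_meas_Iic, G.eq_zero _ (by linarith)]
  simp

lemma s6_ae_Icc (G : CDF θL θH) : ∀ᵐ θ ∂G.meas, θ ∈ Set.Icc θL θH := by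
  have h2 : G.meas (Set.Ioi θH) = 0 := by
    rw [s6_meas_Ioi, G.eq_one _ le_rfl]; simp
  have hsub : (Set.Icc θL θH)ᶜ ⊆ Set.Iio θL ∪ Set.Ioi θH := by
    intro x hx
    simp only [Set.mem_compl_iff, Set.mem_Icc, not_and_or, not_le] at hx
    rcases hx with h | h
    · exact Or.inl h
    · exact Or.inr h
  exact measure_mono_null hsub (measure_union_null (s6_meas_Iio G) h2)


lemma s6_supp_between (G : CDF θL θH) {a b : ℝ} (h : G.toFun a < G.toFun b) :
    ∃ x ∈ G.supp, a ≤ x ∧ x ≤ b := by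
  set S : Set ℝ := {x | G.toFun x ≤ G.toFun a} with hS
  have haS : a ∈ S := by simp [hS]
  have hne : S.Nonempty := ⟨a, haS⟩
  have hub : ∀ y ∈ S, y ≤ b := by
    intro y hy
    by_contra hyb
    push_neg at hyb
    have hba : G.toFun b ≤ G.toFun a := le_trans (G.mono hyb.le) hy
    linarith
  have hbdd : BddAbove S := ⟨b, hub⟩
  set x := sSup S with hx
  have hax : a ≤ x := le_csSup hbdd haS
  have hxb : x ≤ b := csSup_le hne hub
  refine ⟨x, ?_, hax, hxb⟩
  intro ε hε
  have h1 : G.toFun a < G.toFun (x + ε) := by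
    by_contra hcon
    push_neg at hcon
    have : x + ε ∈ S := hcon
    linarith [le_csSup hbdd this]
  have h2 : G.toFun (x - ε) ≤ G.toFun a := by
    obtain ⟨y, hyS, hy⟩ := exists_lt_of_lt_csSup hne (show x - ε < x by linarith)
    exact le_trans (G.mono hy.le) hyS
  linarith

lemma s6_supp_nonempty (G : CDF θL θH) (hθ : θL < θH) : G.supp.Nonempty := by
  have h : G.toFun (θL - 1) < G.toFun θH := by
    rw [G.eq_zero _ (by linarith), G.eq_one _ le_rfl]; norm_num
  obtain ⟨x, hx, -, -⟩ := s6_supp_between G h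
  exact ⟨x, hx⟩

lemma s6_supp_closed (G : CDF θL θH) : IsClosed G.supp := by
  rw [← isOpen_compl_iff]
  rw [isOpen_iff_forall_mem_open]
  intro x hx
  simp only [Set.mem_compl_iff, CDF.supp, Set.mem_setOf_eq, not_forall] at hx
  obtain ⟨ε, hε, hno⟩ := hx
  push_neg at hno
  refine ⟨Metric.ball x (ε/2), ?_, Metric.isOpen_ball, by simp [hε]⟩
  intro y hy
  simp only [Metric.mem_ball, Real.dist_eq] at hy
  simp only [Set.mem_compl_iff, CDF.supp, Set.mem_setOf_eq, not_forall]
  obtain ⟨hy1, hy2⟩ := abs_lt.1 hy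
  have h1 : G.toFun (y + ε/2) ≤ G.toFun (x + ε) := G.mono (by linarith)
  have h2 : G.toFun (x - ε) ≤ G.toFun (y - ε/2) := G.mono (by linarith)
  exact ⟨ε/2, by linarith, not_lt.2 (by linarith)⟩

lemma s6_zero_of_lt_thetaLF (F : CDF θL θH) (hθ : θL < θH) (hsupp : F.supp ⊆ Set.Ioo θL θH)
    {t : ℝ} (ht : t < thetaLF F) : F.toFun t = 0 := by
  by_contra hne
  have hpos : 0 < F.toFun t := lt_of_le_of_ne (s6_nonneg F t) (Ne.symm hne)
  have h : F.toFun (θL - 1) < F.toFun t := by rw [F.eq_zero _ (by linarith)]; exact hpos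
  obtain ⟨x, hx, -, hxt⟩ := s6_supp_between F h
  have : thetaLF F ≤ x := csInf_le ⟨θL, fun y hy => (hsupp hy).1.le⟩ hx
  linarith

lemma s6_one_of_gt_thetaHF (F : CDF θL θH) (hθ : θL < θH) (hsupp : F.supp ⊆ Set.Ioo θL θH)
    {t : ℝ} (ht : thetaHF F < t) : F.toFun t = 1 := by
  by_contra hne
  have hlt : F.toFun t < 1 := lt_of_le_of_ne (s6_le_one F t) hne
  have h : F.toFun t < F.toFun (θH + 1) := by rw [F.eq_one (θH + 1) (by linarith)]; exact hlt
  obtain ⟨x, hx, hxt, -⟩ := s6_supp_between F h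
  have : x ≤ thetaHF F := le_csSup ⟨θH, fun y hy => (hsupp hy).2.le⟩ hx
  linarith

lemma s6_thetaLF_mem (F : CDF θL θH) (hθ : θL < θH) (hsupp : F.supp ⊆ Set.Ioo θL θH) :
    thetaLF F ∈ F.supp :=
  IsClosed.csInf_mem (s6_supp_closed F) (s6_supp_nonempty F hθ)
    ⟨θL, fun y hy => (hsupp hy).1.le⟩

lemma s6_thetaHF_mem (F : CDF θL θH) (hθ : θL < θH) (hsupp : F.supp ⊆ Set.Ioo θL θH) :
    thetaHF F ∈ F.supp :=
  IsClosed.csSup_mem (s6_supp_closed F) (s6_supp_nonempty F hθ)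
    ⟨θH, fun y hy => (hsupp hy).2.le⟩

lemma s6_thetaLF_le_thetaHF (F : CDF θL θH) (hθ : θL < θH) (hsupp : F.supp ⊆ Set.Ioo θL θH) :
    thetaLF F ≤ thetaHF F :=
  csInf_le_csSup (s6_supp_nonempty F hθ) ⟨θL, fun y hy => (hsupp hy).1.le⟩
    ⟨θH, fun y hy => (hsupp hy).2.le⟩



lemma s6_measurable_indicator {f : ℝ → ℝ} {s : Set ℝ} (hs : IsOpen s)
    (hf : ContinuousOn f s) : Measurable (s.indicator f) := by
  apply measurable_of_isOpen
  intro V hV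
  by_cases h0 : (0:ℝ) ∈ V
  · have : s.indicator f ⁻¹' V = (s ∩ f ⁻¹' V) ∪ sᶜ := by
      ext x
      by_cases hx : x ∈ s <;> simp [Set.indicator, hx, h0]
    rw [this]
    exact ((hf.isOpen_inter_preimage hs hV).measurableSet).union hs.measurableSet.compl
  · have : s.indicator f ⁻¹' V = s ∩ f ⁻¹' V := by
      ext x
      by_cases hx : x ∈ s <;> simp [Set.indicator, hx, h0]
    rw [this]
    exact (hf.isOpen_inter_preimage hs hV).measurableSet

variable {θ₀ : ℝ} {c c' c'' : ℝ → ℝ}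

lemma s6_c'_contOn (hc : CostAssumptions θL θH θ₀ c c' c'') :
    ContinuousOn c' (Set.Ioo θL θH) :=
  fun x hx => ((hc.hasDeriv2 x hx).continuousAt).continuousWithinAt

lemma s6_c'_strictMono (hc : CostAssumptions θL θH θ₀ c c' c'') :
    StrictMonoOn c' (Set.Ioo θL θH) := by
  apply strictMonoOn_of_deriv_pos (convex_Ioo θL θH) (s6_c'_contOn hc)
  intro x hx
  rw [interior_Ioo] at hx
  rw [(hc.hasDeriv2 x hx).deriv]
  exact hc.pos2 x hx

lemma s6_c'_integrableOn (hθ : θL < θH) (hc : CostAssumptions θL θH θ₀ c c' c'') :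
    IntegrableOn c' (Set.Ioo θL θH) volume := by
  set m := (θL + θH)/2 with hm
  have hmL : θL < m := by simp only [hm]; linarith
  have hmH : m < θH := by simp only [hm]; linarith
  have hleft : IntegrableOn c' (Set.Ioc θL m) volume := by
    have hint : IntegrableOn (fun x => c' m - c' x) (Set.Ioc θL m) volume := by
      apply intervalIntegral.integrableOn_deriv_of_nonneg (g := fun x => c' m * x - c x)
      · exact (continuousOn_const.mul continuousOn_id).sub
          (hc.cont.mono (Set.Icc_subset_Icc le_rfl hmH.le))
      · intro x hx
        have hx' : x ∈ Set.Ioo θL θH := ⟨hx.1, hx.2.trans hmH⟩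
        have h := ((hasDerivAt_id' x).const_mul (c' m)).sub (hc.hasDeriv x hx')
        rw [mul_one] at h
        exact h
      · intro x hx
        have hx' : x ∈ Set.Ioo θL θH := ⟨hx.1, hx.2.trans hmH⟩
        have := (s6_c'_strictMono hc).monotoneOn hx' ⟨hmL, hmH⟩ hx.2.le
        linarith
    have : IntegrableOn (fun x => c' m - (c' m - c' x)) (Set.Ioc θL m) volume :=
      (integrableOn_const measure_Ioc_lt_top.ne).sub hint
    simpa using this
  have hright : IntegrableOn c' (Set.Ioc m θH) volume := by
    have hint : IntegrableOn (fun x => c' x - c' m) (Set.Ioc m θH) volume := by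
      apply intervalIntegral.integrableOn_deriv_of_nonneg (g := fun x => c x - c' m * x)
      · exact (hc.cont.mono (Set.Icc_subset_Icc hmL.le le_rfl)).sub
          (continuousOn_const.mul continuousOn_id)
      · intro x hx
        have hx' : x ∈ Set.Ioo θL θH := ⟨hmL.trans hx.1, hx.2⟩
        have h := (hc.hasDeriv x hx').sub ((hasDerivAt_id' x).const_mul (c' m))
        rw [mul_one] at h
        exact h
      · intro x hx
        have hx' : x ∈ Set.Ioo θL θH := ⟨hmL.trans hx.1, hx.2⟩
        have := (s6_c'_strictMono hc).monotoneOn ⟨hmL, hmH⟩ hx' hx.1.le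
        linarith
    have : IntegrableOn (fun x => (c' x - c' m) + c' m) (Set.Ioc m θH) volume :=
      hint.add (integrableOn_const measure_Ioc_lt_top.ne)
    simpa using this
  have hcup : Set.Ioo θL θH ⊆ Set.Ioc θL m ∪ Set.Ioc m θH := by
    intro x hx
    rcases le_or_gt x m with h | h
    · exact Or.inl ⟨hx.1, h⟩
    · exact Or.inr ⟨h, hx.2.le⟩
  exact (hleft.union hright).mono_set hcup

lemma s6_c'_integrableOn_Ioc (hθ : θL < θH) (hc : CostAssumptions θL θH θ₀ c c' c'') :
    IntegrableOn c' (Set.Ioc θL θH) volume :=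
  (s6_c'_integrableOn hθ hc).congr_set_ae MeasureTheory.Ioo_ae_eq_Ioc.symm

lemma s6_c'_ftc (hθ : θL < θH) (hc : CostAssumptions θL θH θ₀ c c' c'')
    {θ : ℝ} (hmem : θ ∈ Set.Icc θL θH) :
    ∫ t in Set.Ioc θL θ, c' t = c θ - c θL := by
  rw [← intervalIntegral.integral_of_le hmem.1]
  apply intervalIntegral.integral_eq_sub_of_hasDeriv_right_of_le hmem.1
  · exact hc.cont.mono (Set.Icc_subset_Icc le_rfl hmem.2)
  · intro x hx
    exact (hc.hasDeriv x ⟨hx.1, hx.2.trans_le hmem.2⟩).hasDerivWithinAt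
  · rw [intervalIntegrable_iff_integrableOn_Ioc_of_le hmem.1]
    exact (s6_c'_integrableOn_Ioc hθ hc).mono_set (Set.Ioc_subset_Ioc le_rfl hmem.2)

lemma s6_IFun_intable (F₀ F : CDF θL θH) (a b : ℝ) :
    IntervalIntegrable (fun t => F₀.toFun t - F.toFun t) volume a b :=
  (F₀.mono.intervalIntegrable).sub (F.mono.intervalIntegrable)

lemma s6_IFun_cont (F₀ F : CDF θL θH) : Continuous (IFun F₀ F) :=
  intervalIntegral.continuous_primitive (fun a b => s6_IFun_intable F₀ F a b) θL



lemma s6_rep (hθ : θL < θH) (G : CDF θL θH) (q : ℝ → ℝ) (hqm : Measurable q)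
    (hqi : Integrable q volume) (hq0 : ∀ t, t ∉ Set.Ioo θL θH → q t = 0)
    (g : ℝ → ℝ) (hg : ∀ θ ∈ Set.Icc θL θH, g θ = g θL + ∫ t in θL..θ, q t) :
    G.integ g = g θL + ∫ t in Set.Ioo θL θH, (1 - G.toFun t) * q t := by
  haveI := s6_prob G
  set μ := G.meas with hμ
  set f : ℝ → ℝ → ℝ := fun θ t => (Set.Ioo θL θ).indicator q t with hf
  -- pointwise identity on Icc
  have hptwise : ∀ θ ∈ Set.Icc θL θH, (∫ t in θL..θ, q t) = ∫ t, f θ t ∂volume := by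
    intro θ hmem
    rw [intervalIntegral.integral_of_le hmem.1, MeasureTheory.integral_Ioc_eq_integral_Ioo,
      ← MeasureTheory.integral_indicator measurableSet_Ioo]
  -- uncurry measurability
  have hS : MeasurableSet {z : ℝ × ℝ | θL < z.2 ∧ z.2 < z.1} :=
    (measurable_snd measurableSet_Ioi).inter (measurableSet_lt measurable_snd measurable_fst)
  have huncM : Measurable (Function.uncurry f) := by
    have heq : Function.uncurry f =
        Set.indicator {z : ℝ × ℝ | θL < z.2 ∧ z.2 < z.1} (fun z => q z.2) := by
      funext z
      simp only [Function.uncurry, hf, Set.indicator_apply, Set.mem_Ioo, Set.mem_setOf_eq]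
    rw [heq]
    exact (hqm.comp measurable_snd).indicator hS
  -- product integrability
  have hbound : ∀ θ, (∫ t, ‖f θ t‖ ∂volume) ≤ ∫ t, ‖q t‖ ∂volume := by
    intro θ
    apply MeasureTheory.integral_mono ((hqi.indicator measurableSet_Ioo).norm) hqi.norm
    intro t
    exact norm_indicator_le_norm_self (f := q) (a := t)
  have huncInt : Integrable (Function.uncurry f) (μ.prod volume) := by
    rw [MeasureTheory.integrable_prod_iff huncM.aestronglyMeasurable]
    constructor
    · exact Filter.Eventually.of_forall fun θ => hqi.indicator measurableSet_Ioo
    · apply Integrable.mono' (integrable_const (∫ t, ‖q t‖ ∂volume))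
      · exact (huncM.norm.aestronglyMeasurable).integral_prod_right'
      · apply Filter.Eventually.of_forall
        intro θ
        rw [Real.norm_of_nonneg (integral_nonneg fun t => norm_nonneg _)]
        exact hbound θ
  -- innermost integral is bounded, giving integrability of partial integral
  have hInt : Integrable (fun θ => ∫ t, f θ t ∂volume) μ := by
    apply Integrable.mono' (integrable_const (∫ t, ‖q t‖ ∂volume))
    · exact huncInt.aestronglyMeasurable.integral_prod_right'
    · apply Filter.Eventually.of_forall
      intro θ
      exact le_trans (norm_integral_le_integral_norm _) (hbound θ)
  -- step 1: rewrite the integrand a.e.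
  have h1 : G.integ g = ∫ θ, (g θL + ∫ t, f θ t ∂volume) ∂μ := by
    apply integral_congr_ae
    filter_upwards [s6_ae_Icc G] with θ hmem
    rw [hg θ hmem, hptwise θ hmem]
  rw [h1, integral_add (integrable_const _) hInt, integral_const]
  simp only [probReal_univ, smul_eq_mul, one_mul]
  congr 1
  -- swap
  rw [MeasureTheory.integral_integral_swap huncInt]
  -- inner evaluation
  have hinner : ∀ t, (∫ θ, f θ t ∂μ) =
      (Set.Ioo θL θH).indicator (fun t => (1 - G.toFun t) * q t) t := by
    intro t
    by_cases h1t : θL < t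
    · have heq : (fun θ => f θ t) = Set.indicator (Set.Ioi t) (fun _ => q t) := by
        funext θ
        simp only [hf, Set.indicator_apply, Set.mem_Ioo, Set.mem_Ioi]
        by_cases h : t < θ <;> simp [h, h1t]
      rw [heq, MeasureTheory.integral_indicator_const (q t) measurableSet_Ioi,
        measureReal_def, s6_meas_Ioi, ENNReal.toReal_ofReal (by linarith [s6_le_one G t])]
      by_cases h2t : t < θH
      · rw [Set.indicator_of_mem (Set.mem_Ioo.2 ⟨h1t, h2t⟩)]
        simp [smul_eq_mul]
      · rw [Set.indicator_of_notMem (fun hmem => h2t hmem.2),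
          hq0 t (fun hmem => h2t hmem.2)]
        simp
    · have heq : (fun θ => f θ t) = fun _ => (0:ℝ) := by
        funext θ
        simp only [hf, Set.indicator_apply, Set.mem_Ioo]
        simp [h1t]
      rw [heq, integral_const]
      rw [Set.indicator_of_notMem (fun hmem => h1t hmem.1)]
      simp
  rw [MeasureTheory.integral_congr_ae (Filter.Eventually.of_forall hinner),
    MeasureTheory.integral_indicator measurableSet_Ioo]



lemma s6_partB (hθ : θL < θH) (F₀ F F' : CDF θL θH) (hF : IsSignal F₀ F) (hF' : IsSignal F₀ F')
    (P : ℝ → ℝ) (hPmono : Monotone P)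
    (hPconst : ∀ a b : ℝ, Set.Ioo a b ⊆ {θ | θ ∈ Set.Icc θL θH ∧ 0 < IFun F₀ F θ} →
      ∀ x ∈ Set.Ioo a b, ∀ y ∈ Set.Ioo a b, P x = P y)
    (hPlo : ∀ t, t ≤ θL → P t = P θL) (hPhi : ∀ t, θH ≤ t → P t = P θH) :
    ∫ t in Set.Ioo θL θH, P t * (F.toFun t - F'.toFun t) ≤ 0 := by
  classical
  set d : ℝ → ℝ := fun t => F.toFun t - F'.toFun t with hd
  have hdmeas : Measurable d := F.mono.measurable.sub F'.mono.measurable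
  have hdbdd : ∀ t, ‖d t‖ ≤ 1 := by
    intro t
    rw [Real.norm_eq_abs, abs_sub_le_iff]
    constructor
    · linarith [s6_le_one F t, s6_nonneg F' t]
    · linarith [s6_le_one F' t, s6_nonneg F t]
  have hdii : ∀ a b : ℝ, IntervalIntegrable d volume a b :=
    fun a b => (F.mono.intervalIntegrable).sub (F'.mono.intervalIntegrable)
  have hdInt : IntegrableOn d (Set.Ioo θL θH) volume :=
    ((intervalIntegrable_iff_integrableOn_Ioc_of_le hθ.le).1 (hdii θL θH)).mono_set
      Set.Ioo_subset_Ioc_self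
  set D : ℝ → ℝ := fun s => ∫ t in θL..s, d t with hD
  have hDcont : Continuous D := intervalIntegral.continuous_primitive hdii θL
  have hD_eq : ∀ s, D s = IFun F₀ F' s - IFun F₀ F s := by
    intro s
    unfold IFun
    rw [← intervalIntegral.integral_sub (s6_IFun_intable F₀ F' θL s) (s6_IFun_intable F₀ F θL s)]
    simp only [hD]
    congr 1
    funext t
    ring
  have hDθH : D θH = 0 := by
    rw [hD_eq, hF'.2, hF.2, sub_zero]
  -- the Stieltjes measure for P
  set H := hPmono.stieltjesFunction with hHdef
  set ν := H.measure with hν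
  have hH_eq : ∀ x, H x = Function.rightLim P x := fun x => rfl
  have hrlim : ∀ (a K : ℝ), (∀ᶠ x in nhdsWithin a (Set.Ioi a), P x = K) →
      Function.rightLim P a = K := by
    intro a K hev
    refine rightLim_eq_of_tendsto ?_
    exact Tendsto.congr' (by filter_upwards [hev] with x hx; exact hx.symm) tendsto_const_nhds
  have hH_lo : ∀ t, t < θL → H t = P θL := by
    intro t ht
    rw [hH_eq]
    apply hrlim
    filter_upwards [Ioo_mem_nhdsGT_of_mem (Set.mem_Ico.2 ⟨le_refl t, ht⟩)] with x hx
    exact hPlo x hx.2.le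
  have hH_hi : ∀ t, θH ≤ t → H t = P θH := by
    intro t ht
    rw [hH_eq]
    apply hrlim
    filter_upwards [self_mem_nhdsWithin] with x hx
    exact hPhi x (ht.trans (le_of_lt hx))
  have htb : Filter.Tendsto (⇑H) Filter.atBot (nhds (P θL)) := by
    have h : (fun _ : ℝ => P θL) =ᶠ[Filter.atBot] ⇑H := by
      filter_upwards [Filter.eventually_le_atBot (θL - 1)] with x hx
      exact (hH_lo x (by linarith)).symm
    exact Tendsto.congr' h tendsto_const_nhds
  have htt : Filter.Tendsto (⇑H) Filter.atTop (nhds (P θH)) := by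
    have h : (fun _ : ℝ => P θH) =ᶠ[Filter.atTop] ⇑H := by
      filter_upwards [Filter.eventually_ge_atTop θH] with x hx
      exact (hH_hi x hx).symm
    exact Tendsto.congr' h tendsto_const_nhds
  haveI hνfin : IsFiniteMeasure ν := by
    constructor
    rw [hν, H.measure_univ htb htt]
    exact ENNReal.ofReal_lt_top
  -- ν vanishes where I_F > 0
  set U : Set ℝ := Set.Ioo θL θH ∩ {s | 0 < IFun F₀ F s} with hU
  have hUopen : IsOpen U :=
    isOpen_Ioo.inter (isOpen_lt continuous_const (s6_IFun_cont F₀ F))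
  have hUsub : U ⊆ {θ | θ ∈ Set.Icc θL θH ∧ 0 < IFun F₀ F θ} := by
    intro x hx
    exact ⟨Set.mem_Icc.2 ⟨hx.1.1.le, hx.1.2.le⟩, hx.2⟩
  have hνIoo : ∀ a b : ℝ, Set.Ioo a b ⊆ U → ν (Set.Ioo a b) = 0 := by
    intro a b hab
    rcases le_or_gt b a with h | h
    · rw [Set.Ioo_eq_empty_of_le h]; simp
    · obtain ⟨w, hw⟩ : (Set.Ioo a b).Nonempty := Set.nonempty_Ioo.2 h
      set K := P w with hK
      have hconst : ∀ x ∈ Set.Ioo a b, P x = K :=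
        fun x hx => hPconst a b (hab.trans hUsub) x hx w hw
      have hHa : H a = K := by
        rw [hH_eq]
        apply hrlim
        filter_upwards [Ioo_mem_nhdsGT_of_mem (Set.mem_Ico.2 ⟨le_refl a, h⟩)] with x hx
        exact hconst x hx
      have hHlim : Function.leftLim (⇑H) b = K := by
        apply leftLim_eq_of_tendsto
        have hev : ∀ᶠ x in nhdsWithin b (Set.Iio b), H x = K := by
          filter_upwards [Ioo_mem_nhdsLT_of_mem (Set.mem_Ioc.2 ⟨h, le_refl b⟩)] with x hx
          rw [hH_eq]
          apply hrlim
          filter_upwards [Ioo_mem_nhdsGT_of_mem (Set.mem_Ico.2 ⟨le_refl x, hx.2⟩)] with y hy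
          exact hconst y ⟨hx.1.trans hy.1, hy.2⟩
        exact Tendsto.congr' (by filter_upwards [hev] with x hx; exact hx.symm) tendsto_const_nhds
      rw [hν, H.measure_Ioo, hHlim, hHa]
      simp
  have hνU : ν U = 0 := by
    set V : ℚ × ℚ → Set ℝ := fun r => if Set.Ioo (r.1 : ℝ) (r.2 : ℝ) ⊆ U
      then Set.Ioo (r.1 : ℝ) (r.2 : ℝ) else ∅ with hV
    have hcov : U ⊆ ⋃ r : ℚ × ℚ, V r := by
      intro x hx
      obtain ⟨l, u, hlu, hsub⟩ := mem_nhds_iff_exists_Ioo_subset.1 (hUopen.mem_nhds hx)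
      obtain ⟨q1, hq1, hq1'⟩ := exists_rat_btwn hlu.1
      obtain ⟨q2, hq2, hq2'⟩ := exists_rat_btwn hlu.2
      have hss : Set.Ioo (q1 : ℝ) (q2 : ℝ) ⊆ U :=
        fun y hy => hsub ⟨hq1.trans hy.1, hy.2.trans hq2'⟩
      refine Set.mem_iUnion.2 ⟨(q1, q2), ?_⟩
      rw [hV]
      simp only [hss, if_true]
      exact ⟨hq1', hq2⟩
    refine measure_mono_null hcov (measure_iUnion_null fun r => ?_)
    rw [hV]
    by_cases hss : Set.Ioo (r.1 : ℝ) (r.2 : ℝ) ⊆ U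
    · simpa [hss] using hνIoo r.1 r.2 hss
    · simp [hss]
  -- a.e. equality of P and H (right-continuous modification)
  have hPae : ∀ᵐ t ∂(volume : Measure ℝ), P t = H t := by
    have hcnt : Set.Countable {x | ¬ContinuousAt P x} := hPmono.countable_not_continuousAt
    have hnull : (volume : Measure ℝ) {x | ¬ContinuousAt P x} = 0 :=
      Set.Countable.measure_zero hcnt volume
    have hae : ∀ᵐ t ∂(volume : Measure ℝ), ContinuousAt P t := by
      rw [MeasureTheory.ae_iff]
      simpa using hnull
    filter_upwards [hae] with t ht
    rw [hH_eq]
    exact (rightLim_eq_of_tendsto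
      ht.continuousWithinAt).symm
  have hstep1 : ∫ t in Set.Ioo θL θH, P t * d t = ∫ t in Set.Ioo θL θH, H t * d t := by
    apply integral_congr_ae
    filter_upwards [ae_restrict_of_ae hPae] with t ht
    rw [ht]
  have hHbdd : ∀ t ∈ Set.Ioo θL θH, |H t - H θL| ≤ H θH - H θL := by
    intro t ht
    rw [abs_of_nonneg (sub_nonneg.2 (H.mono ht.1.le))]
    have := H.mono ht.2.le
    linarith
  have hHmeas : Measurable (⇑H) := H.mono.measurable
  have hint1 : IntegrableOn (fun t => H θL * d t) (Set.Ioo θL θH) volume := hdInt.const_mul _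
  have hint2 : IntegrableOn (fun t => (H t - H θL) * d t) (Set.Ioo θL θH) volume := by
    apply Measure.integrableOn_of_bounded (M := (H θH - H θL) * 1) measure_Ioo_lt_top.ne
    · exact ((hHmeas.sub measurable_const).mul hdmeas).aestronglyMeasurable
    · rw [MeasureTheory.ae_restrict_iff' measurableSet_Ioo]
      apply Filter.Eventually.of_forall
      intro t ht
      rw [Real.norm_eq_abs, abs_mul]
      exact mul_le_mul (hHbdd t ht) (by simpa [Real.norm_eq_abs] using hdbdd t)
        (abs_nonneg _) (by linarith [H.mono hθ.le])
  have hsplit : ∫ t in Set.Ioo θL θH, H t * d t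
      = (∫ t in Set.Ioo θL θH, H θL * d t) + ∫ t in Set.Ioo θL θH, (H t - H θL) * d t := by
    rw [← integral_add hint1 hint2]
    exact integral_congr_ae (Filter.Eventually.of_forall fun t => by ring)
  have hIood : ∫ t in Set.Ioo θL θH, d t = D θH := by
    simp only [hD]
    rw [intervalIntegral.integral_of_le hθ.le, MeasureTheory.integral_Ioc_eq_integral_Ioo]
  have hzero : ∫ t in Set.Ioo θL θH, H θL * d t = 0 := by
    rw [MeasureTheory.integral_const_mul, hIood, hDθH, mul_zero]
  set μt := volume.restrict (Set.Ioo θL θH) with hμt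
  haveI : IsFiniteMeasure μt := ⟨by rw [hμt, Measure.restrict_apply_univ]; exact measure_Ioo_lt_top⟩
  set f2 : ℝ → ℝ → ℝ := fun t s => Set.indicator (Set.Ioc θL t) (fun _ => d t) s with hf2
  have hf2meas : Measurable (Function.uncurry f2) := by
    have heq : Function.uncurry f2 =
        Set.indicator {z : ℝ × ℝ | θL < z.2 ∧ z.2 ≤ z.1} (fun z => d z.1) := by
      funext z
      simp only [Function.uncurry, hf2, Set.indicator_apply, Set.mem_Ioc, Set.mem_setOf_eq]
    rw [heq]
    exact (hdmeas.comp measurable_fst).indicator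
      ((measurable_snd measurableSet_Ioi).inter (measurableSet_le measurable_snd measurable_fst))
  have hf2int : Integrable (Function.uncurry f2) (μt.prod ν) := by
    apply Integrable.mono' (integrable_const (1:ℝ)) hf2meas.aestronglyMeasurable
    apply Filter.Eventually.of_forall
    rintro ⟨t, s⟩
    calc ‖Function.uncurry f2 (t, s)‖
        ≤ ‖d t‖ := norm_indicator_le_norm_self (f := fun _ => d t) (a := s)
      _ ≤ 1 := hdbdd t
  have hterm2 : ∫ t in Set.Ioo θL θH, (H t - H θL) * d t = ∫ t, (∫ s, f2 t s ∂ν) ∂μt := by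
    apply integral_congr_ae
    apply Filter.eventuallyEq_of_mem (self_mem_ae_restrict measurableSet_Ioo)
    intro t ht
    simp only [hf2]
    rw [MeasureTheory.integral_indicator_const (d t) measurableSet_Ioc, hν, measureReal_def, H.measure_Ioc,
      ENNReal.toReal_ofReal (sub_nonneg.2 (H.mono ht.1.le)), smul_eq_mul]
  rw [hstep1, hsplit, hzero, zero_add, hterm2, MeasureTheory.integral_integral_swap hf2int]
  have hinner : ∀ s, (∫ t, f2 t s ∂μt) =
      Set.indicator (Set.Ioc θL θH) (fun s => D θH - D s) s := by
    intro s
    by_cases hs1 : θL < s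
    · have heq : (fun t => f2 t s) = Set.indicator (Set.Ici s) d := by
        funext t
        simp only [hf2, Set.indicator_apply, Set.mem_Ioc, Set.mem_Ici]
        by_cases h : s ≤ t <;> simp [h, hs1]
      rw [heq, MeasureTheory.integral_indicator measurableSet_Ici, hμt,
        Measure.restrict_restrict measurableSet_Ici]
      have hseteq : Set.Ici s ∩ Set.Ioo θL θH = Set.Ico s θH := by
        ext x
        simp only [Set.mem_inter_iff, Set.mem_Ici, Set.mem_Ioo, Set.mem_Ico]
        constructor
        · rintro ⟨h1, h2, h3⟩; exact ⟨h1, h3⟩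
        · rintro ⟨h1, h2⟩; exact ⟨h1, hs1.trans_le h1, h2⟩
      rw [hseteq]
      by_cases hs2 : s ≤ θH
      · rw [Set.indicator_of_mem (Set.mem_Ioc.2 ⟨hs1, hs2⟩)]
        rw [MeasureTheory.integral_Ico_eq_integral_Ioo,
          ← MeasureTheory.integral_Ioc_eq_integral_Ioo, ← intervalIntegral.integral_of_le hs2]
        simp only [hD]
        rw [← intervalIntegral.integral_interval_sub_left (hdii θL θH) (hdii θL s)]
      · rw [Set.indicator_of_notMem (fun hmem => hs2 hmem.2)]
        rw [Set.Ico_eq_empty (fun h => hs2 (le_of_lt h))]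
        simp
    · have heq : (fun t => f2 t s) = fun _ => (0:ℝ) := by
        funext t
        simp only [hf2, Set.indicator_apply, Set.mem_Ioc]
        simp [hs1]
      rw [heq, Set.indicator_of_notMem (fun hmem => hs1 hmem.1)]
      simp
  rw [MeasureTheory.integral_congr_ae (Filter.Eventually.of_forall hinner),
    MeasureTheory.integral_indicator measurableSet_Ioc]
  have hDae : ∀ᵐ s ∂(ν.restrict (Set.Ioc θL θH)), 0 ≤ D s := by
    rw [MeasureTheory.ae_restrict_iff' measurableSet_Ioc, MeasureTheory.ae_iff]
    apply measure_mono_null ?_ hνU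
    intro s hs
    simp only [Set.mem_setOf_eq, not_forall, not_le] at hs
    obtain ⟨hsIoc, hsD⟩ := hs
    have hI'pos : 0 ≤ IFun F₀ F' s := hF'.1 s ⟨hsIoc.1.le, hsIoc.2⟩
    have hIpos : 0 < IFun F₀ F s := by
      have := hD_eq s
      linarith
    have hsne : s ≠ θH := by
      intro h
      rw [h, hF.2] at hIpos
      exact lt_irrefl 0 hIpos
    exact ⟨⟨hsIoc.1, lt_of_le_of_ne hsIoc.2 hsne⟩, hIpos⟩
  have hpos : 0 ≤ ∫ s in Set.Ioc θL θH, D s ∂ν := integral_nonneg_of_ae hDae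
  have heq2 : ∫ s in Set.Ioc θL θH, (D θH - D s) ∂ν = - ∫ s in Set.Ioc θL θH, D s ∂ν := by
    rw [hDθH]
    simp only [zero_sub]
    exact integral_neg _
  rw [heq2]
  linarith


end Aux


theorem statement6 {θL θH : ℝ} (hθL : 0 ≤ θL) (hθ : θL < θH)
    (F₀ : CDF θL θH) (hF₀ : IsPrior F₀)
    (c c' c'' : ℝ → ℝ) (hc : CostAssumptions θL θH F₀.mean c c' c'')
    (qbar : ℝ) (hqbar : 0 < qbar)
    (F : CDF θL θH) (hF : IsSignal F₀ F) (hsupp : F.supp ⊆ Set.Ioo θL θH)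
    (Q : ℝ → ℝ) (hICC : IsICC qbar F₀ c' F Q) :
    ∀ u : ℝ, 0 ≤ u → IsIC F₀ c Q u F := by
  classical
  intro u hu
  obtain ⟨p, ⟨⟨M, hM⟩, hpmono, hpconst, hplo, hphi⟩, hQdef⟩ := hICC
  set tF := thetaLF F with htF
  set tH := thetaHF F with htH
  have htFIoo : tF ∈ Set.Ioo θL θH := hsupp (s6_thetaLF_mem F hθ hsupp)
  have htHIoo : tH ∈ Set.Ioo θL θH := hsupp (s6_thetaHF_mem F hθ hsupp)
  have htFH : tF ≤ tH := s6_thetaLF_le_thetaHF F hθ hsupp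
  have htFIcc : tF ∈ Set.Icc θL θH := ⟨htFIoo.1.le, htFIoo.2.le⟩
  have htHIcc : tH ∈ Set.Icc θL θH := ⟨htHIoo.1.le, htHIoo.2.le⟩
  -- the clamped shadow derivative
  set P : ℝ → ℝ := fun t => p (max θL (min t θH)) with hPdef
  have hclampIcc : ∀ t : ℝ, max θL (min t θH) ∈ Set.Icc θL θH := by
    intro t
    constructor
    · exact le_max_left _ _
    · exact max_le hθ.le (min_le_right _ _)
  have hPmono : Monotone P := by
    intro x y hxy
    exact hpmono (hclampIcc x) (hclampIcc y)
      (max_le_max le_rfl (min_le_min_right _ hxy))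
  have hPeq : ∀ t ∈ Set.Icc θL θH, P t = p t := by
    intro t ht
    rw [hPdef]
    simp only
    rw [min_eq_left ht.2, max_eq_right ht.1]
  have hPlo : ∀ t, t ≤ θL → P t = P θL := by
    intro t ht
    rw [hPdef]
    simp only
    rw [min_eq_left (ht.trans hθ.le), max_eq_left ht, min_eq_left hθ.le, max_eq_left le_rfl]
  have hPhi : ∀ t, θH ≤ t → P t = P θH := by
    intro t ht
    rw [hPdef]
    simp only
    rw [min_eq_right ht, min_eq_right le_rfl]
  -- measurable versions of c' and Q on the open interval
  set c'I := Set.indicator (Set.Ioo θL θH) c' with hc'Idef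
  have hc'Imeas : Measurable c'I := s6_measurable_indicator isOpen_Ioo (s6_c'_contOn hc)
  have hc'Ieq : ∀ t ∈ Set.Ioo θL θH, c'I t = c' t := fun t ht => Set.indicator_of_mem ht c'
  have hc'Iint : Integrable c'I volume :=
    (integrable_indicator_iff measurableSet_Ioo).2 (s6_c'_integrableOn hθ hc)
  set QI := Set.indicator (Set.Ioo θL θH) Q with hQIdef
  have hQIeq : ∀ t ∈ Set.Ioo θL θH, QI t = Q t := fun t ht => Set.indicator_of_mem ht Q
  have hQalloc : ∀ t ∈ Set.Ioo θL θH, Q t = inducedAlloc qbar c' F p t :=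
    fun t ht => hQdef t ⟨ht.1.le, ht.2.le⟩
  have hQImeas : Measurable QI := by
    have hdecomp : QI = fun t =>
        Set.indicator (Set.Ioo θL θH ∩ Set.Iio tF) (fun t => max (p tF + c'I t) 0) t
        + Set.indicator (Set.Ioo θL θH ∩ Set.Icc tF tH) (fun t => P t + c'I t) t
        + Set.indicator (Set.Ioo θL θH ∩ Set.Ioi tH) (fun t => min (p tH + c'I t) qbar) t := by
      funext t
      by_cases ht : t ∈ Set.Ioo θL θH
      · rw [hQIdef]
        rw [Set.indicator_of_mem ht, hQalloc t ht]
        simp only [inducedAlloc, ← htF, ← htH]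
        rcases lt_or_ge t tF with h1 | h1
        · rw [if_pos h1, Set.indicator_of_mem (Set.mem_inter ht (Set.mem_Iio.2 h1)),
            Set.indicator_of_notMem (fun hm => absurd hm.2.1 (not_le.2 h1)),
            Set.indicator_of_notMem (fun hm => absurd hm.2 (not_lt.2 (h1.le.trans htFH)))]
          rw [hc'Ieq t ht]
          ring
        · rcases le_or_gt t tH with h2 | h2
          · rw [if_neg (not_lt.2 h1), if_pos h2,
              Set.indicator_of_notMem (fun hm => absurd hm.2 (not_lt.2 h1)),
              Set.indicator_of_mem (Set.mem_inter ht (Set.mem_Icc.2 ⟨h1, h2⟩)),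
              Set.indicator_of_notMem (fun hm => absurd hm.2 (not_lt.2 h2))]
            rw [hc'Ieq t ht, hPeq t ⟨ht.1.le, ht.2.le⟩]
            ring
          · rw [if_neg (not_lt.2 h1), if_neg (not_le.2 h2),
              Set.indicator_of_notMem (fun hm => absurd hm.2 (not_lt.2 (htFH.trans h2.le))),
              Set.indicator_of_notMem (fun hm => absurd hm.2.2 (not_le.2 h2)),
              Set.indicator_of_mem (Set.mem_inter ht (Set.mem_Ioi.2 h2))]
            rw [hc'Ieq t ht]
            ring
      · rw [hQIdef, Set.indicator_of_notMem ht,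
          Set.indicator_of_notMem (fun hm => ht hm.1),
          Set.indicator_of_notMem (fun hm => ht hm.1),
          Set.indicator_of_notMem (fun hm => ht hm.1)]
        ring
    rw [hdecomp]
    have hm1 : Measurable fun t => max (p tF + c'I t) 0 :=
      (hc'Imeas.const_add _).max measurable_const
    have hm2 : Measurable fun t => P t + c'I t := (hPmono.measurable).add hc'Imeas
    have hm3 : Measurable fun t => min (p tH + c'I t) qbar :=
      (hc'Imeas.const_add _).min measurable_const
    exact ((hm1.indicator (measurableSet_Ioo.inter measurableSet_Iio)).add
      (hm2.indicator (measurableSet_Ioo.inter (measurableSet_Icc)))).add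
      (hm3.indicator (measurableSet_Ioo.inter measurableSet_Ioi))
  -- bound for Q on the open interval
  have hQbound : ∀ t ∈ Set.Ioo θL θH, ‖Q t‖ ≤ M + qbar + ‖c'I t‖ := by
    intro t ht
    have hticc : t ∈ Set.Icc θL θH := ⟨ht.1.le, ht.2.le⟩
    have hMtF : |p tF| ≤ M := hM tF htFIcc
    have hMtH : |p tH| ≤ M := hM tH htHIcc
    have hMt : |p t| ≤ M := hM t hticc
    have hMnn : (0:ℝ) ≤ M := le_trans (abs_nonneg _) hMt
    rw [hQalloc t ht, Real.norm_eq_abs, Real.norm_eq_abs, hc'Idef,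
      Set.indicator_of_mem ht]
    simp only [inducedAlloc, ← htF, ← htH]
    rcases lt_or_ge t tF with h1 | h1
    · rw [if_pos h1]
      rw [abs_of_nonneg (le_max_right _ _)]
      rcases le_or_gt (p tF + c' t) 0 with h | h
      · rw [max_eq_right h]; positivity
      · rw [max_eq_left h.le]
        calc p tF + c' t ≤ |p tF| + |c' t| := by
              have := le_abs_self (p tF)
              have := le_abs_self (c' t)
              linarith
          _ ≤ M + qbar + |c' t| := by linarith
    · rcases le_or_gt t tH with h2 | h2
      · rw [if_neg (not_lt.2 h1), if_pos h2]
        calc |p t + c' t| ≤ |p t| + |c' t| := abs_add_le _ _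
          _ ≤ M + qbar + |c' t| := by linarith
      · rw [if_neg (not_lt.2 h1), if_neg (not_le.2 h2)]
        calc |min (p tH + c' t) qbar| ≤ max |p tH + c' t| |qbar| := abs_min_le_max_abs_abs
          _ ≤ M + qbar + |c' t| := by
              apply max_le
              · calc |p tH + c' t| ≤ |p tH| + |c' t| := abs_add_le _ _
                  _ ≤ M + qbar + |c' t| := by linarith
              · rw [abs_of_pos hqbar]
                have := abs_nonneg (c' t)
                linarith
  have hQIint : Integrable QI volume := by
    rw [hQIdef, integrable_indicator_iff measurableSet_Ioo]
    apply Integrable.mono' (g := fun t => M + qbar + ‖c'I t‖)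
    · exact (integrable_const _).add (hc'Iint.norm.integrableOn)
    · apply hQImeas.aestronglyMeasurable.restrict.congr
      exact Filter.eventuallyEq_of_mem (self_mem_ae_restrict measurableSet_Ioo)
        (fun t ht => hQIeq t ht)
    · filter_upwards [self_mem_ae_restrict measurableSet_Ioo] with t ht
      exact hQbound t ht
  -- the integrand derivative
  set q : ℝ → ℝ := fun t => QI t - c'I t with hqdef
  have hqm : Measurable q := hQImeas.sub hc'Imeas
  have hqi : Integrable q volume := hQIint.sub hc'Iint
  have hq0 : ∀ t, t ∉ Set.Ioo θL θH → q t = 0 := by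
    intro t ht
    rw [hqdef]
    simp only
    rw [hQIdef, hc'Idef, Set.indicator_of_notMem ht, Set.indicator_of_notMem ht, sub_zero]
  have hqeq : ∀ t ∈ Set.Ioo θL θH, q t = Q t - c' t := by
    intro t ht
    rw [hqdef]
    simp only
    rw [hQIeq t ht, hc'Ieq t ht]
  -- the buyer's objective and its representation
  set g : ℝ → ℝ := fun θ => Vfun θL Q u θ - c θ with hgdef
  have haeH : ∀ᵐ t : ℝ ∂volume, t ≠ θH := by
    rw [MeasureTheory.ae_iff]
    have : {t : ℝ | ¬t ≠ θH} = {θH} := by ext t; simp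
    rw [this]
    exact Real.volume_singleton
  have hgid : ∀ θ ∈ Set.Icc θL θH, g θ = g θL + ∫ t in θL..θ, q t := by
    intro θ hmem
    have e1 : ∫ t in Set.Ioc θL θ, q t
        = (∫ t in Set.Ioc θL θ, QI t) - ∫ t in Set.Ioc θL θ, c'I t :=
      integral_sub hQIint.integrableOn hc'Iint.integrableOn
    have e2 : ∫ t in Set.Ioc θL θ, QI t = ∫ t in θL..θ, Q t := by
      rw [intervalIntegral.integral_of_le hmem.1]
      apply integral_congr_ae
      filter_upwards [ae_restrict_of_ae haeH, self_mem_ae_restrict measurableSet_Ioc]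
        with t htne htmem
      exact hQIeq t ⟨htmem.1, lt_of_le_of_ne (htmem.2.trans hmem.2) htne⟩
    have e3 : ∫ t in Set.Ioc θL θ, c'I t = c θ - c θL := by
      rw [← s6_c'_ftc hθ hc hmem]
      apply integral_congr_ae
      filter_upwards [ae_restrict_of_ae haeH, self_mem_ae_restrict measurableSet_Ioc]
        with t htne htmem
      exact hc'Ieq t ⟨htmem.1, lt_of_le_of_ne (htmem.2.trans hmem.2) htne⟩
    have e4 : (∫ t in θL..θ, q t) = (∫ t in θL..θ, Q t) - (c θ - c θL) := by
      rw [intervalIntegral.integral_of_le hmem.1 (f := q), e1, e2, e3]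
    show Vfun θL Q u θ - c θ = (Vfun θL Q u θL - c θL) + ∫ t in θL..θ, q t
    unfold Vfun
    rw [intervalIntegral.integral_same, e4]
    ring
  -- apply the representation lemma
  refine ⟨hF, ?_⟩
  intro F' hF'
  show F'.integ g ≤ F.integ g
  rw [s6_rep hθ F q hqm hqi hq0 g hgid, s6_rep hθ F' q hqm hqi hq0 g hgid]
  -- it suffices to show the difference is nonpositive
  set d : ℝ → ℝ := fun t => F.toFun t - F'.toFun t with hddef
  have hdmeas : Measurable d := F.mono.measurable.sub F'.mono.measurable
  have hdbdd : ∀ t, ‖d t‖ ≤ 1 := by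
    intro t
    rw [hddef, Real.norm_eq_abs, abs_sub_le_iff]
    constructor
    · linarith [s6_le_one F t, s6_nonneg F' t]
    · linarith [s6_le_one F' t, s6_nonneg F t]
  have hqInt : IntegrableOn q (Set.Ioo θL θH) volume := hqi.integrableOn
  have hi1 : IntegrableOn (fun t => (1 - F'.toFun t) * q t) (Set.Ioo θL θH) volume := by
    apply Integrable.mono' hqInt.norm
    · exact ((measurable_const.sub F'.mono.measurable).mul hqm).aestronglyMeasurable.restrict
    · apply Filter.Eventually.of_forall
      intro t
      rw [Real.norm_eq_abs, abs_mul]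
      have h1 : |1 - F'.toFun t| ≤ 1 := by
        rw [abs_le]
        constructor
        · linarith [s6_le_one F' t]
        · linarith [s6_nonneg F' t]
      calc |1 - F'.toFun t| * |q t| ≤ 1 * |q t| :=
            mul_le_mul_of_nonneg_right h1 (abs_nonneg _)
        _ = ‖q t‖ := by rw [one_mul, Real.norm_eq_abs]
  have hi2 : IntegrableOn (fun t => (1 - F.toFun t) * q t) (Set.Ioo θL θH) volume := by
    apply Integrable.mono' hqInt.norm
    · exact ((measurable_const.sub F.mono.measurable).mul hqm).aestronglyMeasurable.restrict
    · apply Filter.Eventually.of_forall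
      intro t
      rw [Real.norm_eq_abs, abs_mul]
      have h1 : |1 - F.toFun t| ≤ 1 := by
        rw [abs_le]
        constructor
        · linarith [s6_le_one F t]
        · linarith [s6_nonneg F t]
      calc |1 - F.toFun t| * |q t| ≤ 1 * |q t| :=
            mul_le_mul_of_nonneg_right h1 (abs_nonneg _)
        _ = ‖q t‖ := by rw [one_mul, Real.norm_eq_abs]
  have hiqd : IntegrableOn (fun t => q t * d t) (Set.Ioo θL θH) volume := by
    apply Integrable.mono' hqInt.norm
    · exact (hqm.mul hdmeas).aestronglyMeasurable.restrict
    · apply Filter.Eventually.of_forall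
      intro t
      rw [Real.norm_eq_abs, abs_mul]
      calc |q t| * |d t| ≤ |q t| * 1 :=
            mul_le_mul_of_nonneg_left (by simpa [Real.norm_eq_abs] using hdbdd t) (abs_nonneg _)
        _ = ‖q t‖ := by rw [mul_one, Real.norm_eq_abs]
  have hiPd : IntegrableOn (fun t => P t * d t) (Set.Ioo θL θH) volume := by
    apply Measure.integrableOn_of_bounded (M := (|P θL| + |P θH|) * 1) measure_Ioo_lt_top.ne
    · exact (hPmono.measurable.mul hdmeas).aestronglyMeasurable
    · filter_upwards [self_mem_ae_restrict measurableSet_Ioo] with t ht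
      rw [Real.norm_eq_abs, abs_mul]
      apply mul_le_mul _ (by simpa [Real.norm_eq_abs] using hdbdd t) (abs_nonneg _)
        (by positivity)
      have h1 : P θL ≤ P t := hPmono ht.1.le
      have h2 : P t ≤ P θH := hPmono ht.2.le
      rw [abs_le]
      constructor
      · calc -(|P θL| + |P θH|) ≤ -|P θL| := by linarith [abs_nonneg (P θH)]
          _ ≤ P θL := neg_abs_le _
          _ ≤ P t := h1
      · calc P t ≤ P θH := h2
          _ ≤ |P θH| := le_abs_self _
          _ ≤ |P θL| + |P θH| := by linarith [abs_nonneg (P θL)]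
  have hiqPd : IntegrableOn (fun t => (q t - P t) * d t) (Set.Ioo θL θH) volume := by
    have : (fun t => (q t - P t) * d t) = fun t => q t * d t - P t * d t := by
      funext t; ring
    rw [this]
    exact hiqd.sub hiPd
  -- split the difference
  have hkey : (∫ t in Set.Ioo θL θH, (1 - F'.toFun t) * q t)
      - (∫ t in Set.Ioo θL θH, (1 - F.toFun t) * q t)
      = (∫ t in Set.Ioo θL θH, (q t - P t) * d t)
        + ∫ t in Set.Ioo θL θH, P t * d t := by
    rw [← integral_sub hi1 hi2, ← integral_add hiqPd hiPd]
    apply integral_congr_ae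
    apply Filter.Eventually.of_forall
    intro t
    simp only [hddef]
    ring
  -- part (a): pointwise sign argument
  have hA : (∫ t in Set.Ioo θL θH, (q t - P t) * d t) ≤ 0 := by
    apply integral_nonpos_of_ae
    filter_upwards [self_mem_ae_restrict measurableSet_Ioo] with t ht
    have hticc : t ∈ Set.Icc θL θH := ⟨ht.1.le, ht.2.le⟩
    have hqt : q t = Q t - c' t := hqeq t ht
    have hPt : P t = p t := hPeq t hticc
    rw [hqt, hPt, hQalloc t ht]
    simp only [inducedAlloc, ← htF, ← htH]
    rcases lt_or_ge t tF with h1 | h1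
    · rw [if_pos h1]
      have hd0 : F.toFun t = 0 := s6_zero_of_lt_thetaLF F hθ hsupp h1
      have hdle : d t ≤ 0 := by
        rw [hddef]
        simp only
        rw [hd0]
        linarith [s6_nonneg F' t]
      apply mul_nonpos_of_nonneg_of_nonpos _ hdle
      have hple : p t ≤ p tF := hpmono hticc htFIcc h1.le
      have : p tF + c' t ≤ max (p tF + c' t) 0 := le_max_left _ _
      linarith
    · rcases le_or_gt t tH with h2 | h2
      · rw [if_neg (not_lt.2 h1), if_pos h2]
        have : p t + c' t - c' t - p t = 0 := by ring
        have heq0 : p t + c' t - c' t - p t = 0 := by ring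
        calc (p t + c' t - c' t - p t) * d t = 0 * d t := by rw [heq0]
          _ = 0 := by ring
          _ ≤ 0 := le_rfl
      · rw [if_neg (not_lt.2 h1), if_neg (not_le.2 h2)]
        have hd1 : F.toFun t = 1 := s6_one_of_gt_thetaHF F hθ hsupp h2
        have hdge : 0 ≤ d t := by
          rw [hddef]
          simp only
          rw [hd1]
          linarith [s6_le_one F' t]
        apply mul_nonpos_of_nonpos_of_nonneg _ hdge
        have hple : p tH ≤ p t := hpmono htHIcc hticc h2.le
        have : min (p tH + c' t) qbar ≤ p tH + c' t := min_le_left _ _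
        linarith
  -- part (b): the shadow derivative part
  have hPconst' : ∀ a b : ℝ, Set.Ioo a b ⊆ {θ | θ ∈ Set.Icc θL θH ∧ 0 < IFun F₀ F θ} →
      ∀ x ∈ Set.Ioo a b, ∀ y ∈ Set.Ioo a b, P x = P y := by
    intro a b hsub x hx y hy
    rw [hPeq x (hsub hx).1, hPeq y (hsub hy).1]
    exact hpconst a b hsub x hx y hy
  have hB := s6_partB hθ F₀ F F' hF hF' P hPmono hPconst' hPlo hPhi
  have hBd : (∫ t in Set.Ioo θL θH, P t * d t) ≤ 0 := by
    simpa [hddef] using hB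
  linarith [hkey, hA, hBd]
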